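/- Let P be a finite line connected poset (the line digraph of H_P is connected as an undirected graph), let T be a line connected spanning tree of H_P, let P_T be the sub-poset generated by T, and let M, N be kP-modules such that there is a natural isomorphism φ*(M_T) ⊕ β*(N_T) ≅ φ*(N_T) ⊕ β*(M_T) on the line poset of P_T (the virtual module [M] − [N] has vanishing gradient on T). Then there exists an integer D such that for every covering relation (x,y) of P_T: dim_k ker M(x ≤ y) = dim_k ker N(x ≤ y) + D and dim_k coker M(x ≤ y) = dim_k coker N(x ≤ y) + D. -/
import Mathlib


/-!
STATEMENT 16: Let `P` be a finite line connected poset, `T` a line connected spanning tree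
of `H_P`, and `M`, `N` `kP`-modules such that `[M] − [N]` has vanishing gradient on `T`.
Then there is an integer `D` such that for every covering relation `(x,y)` of `P_T`:
`dim ker M(x≤y) = dim ker N(x≤y) + D` and `dim coker M(x≤y) = dim coker N(x≤y) + D`.
-/

/-- A `kP`-module: a functor from the poset `P` to finite dimensional
`k`-vector spaces, given by concrete data. -/
structure PModule (k : Type) (P : Type) [Field k] [Preorder P] where
  V : P → Type
  [acg : ∀ x, AddCommGroup (V x)]
  [mod : ∀ x, Module k (V x)]
  [fd : ∀ x, FiniteDimensional k (V x)]
  map : ∀ {x y : P}, x ≤ y → (V x →ₗ[k] V y)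
  map_id : ∀ x : P, map (le_refl x) = LinearMap.id
  map_comp : ∀ {x y z : P} (h₁ : x ≤ y) (h₂ : y ≤ z), map (h₁.trans h₂) = (map h₂).comp (map h₁)

attribute [instance] PModule.acg PModule.mod PModule.fd

/-- An element of the line poset/line digraph of a poset `P`: a covering relation. -/
structure Cov (P : Type) [PartialOrder P] : Type where
  src : P
  tgt : P
  cov : src ⋖ tgt

/-- The order relation of the sub-poset `P_T` generated by a spanning subgraph with edge
set `Te`: the reflexive-transitive closure of the edge relation. -/
def ptle {P : Type} [PartialOrder P] (Te : Set (P × P)) (a b : P) : Prop :=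
  Relation.ReflTransGen (fun x y : P => (x, y) ∈ Te) a b

/-- The strict order relation of `P_T`. -/
def ptlt {P : Type} [PartialOrder P] (Te : Set (P × P)) (a b : P) : Prop :=
  ptle Te a b ∧ ¬ ptle Te b a

/-- The covering relation of `P_T`. -/
def ptcov {P : Type} [PartialOrder P] (Te : Set (P × P)) (a b : P) : Prop :=
  ptlt Te a b ∧ ∀ c : P, ptlt Te a c → ¬ ptlt Te c b

/-- The order relation of the line poset of `P_T`, on the edge set `Te`. -/
def tline {P : Type} [PartialOrder P] (Te : Set (P × P)) (e f : ↥Te) : Prop :=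
  Relation.ReflTransGen (fun a b : ↥Te => (a : P × P).2 = (b : P × P).1) e f


open Module LinearMap

/-- The submodule `p.prod q` is linearly equivalent to `p × q`. -/
def prodSubEquiv {R M N : Type*} [Ring R] [AddCommGroup M] [AddCommGroup N]
    [Module R M] [Module R N] (p : Submodule R M) (q : Submodule R N) :
    ↥(p.prod q) ≃ₗ[R] (↥p × ↥q) where
  toFun x := (⟨x.val.1, (Submodule.mem_prod.mp x.property).1⟩,
              ⟨x.val.2, (Submodule.mem_prod.mp x.property).2⟩)
  invFun x := ⟨(x.1.val, x.2.val), Submodule.mem_prod.mpr ⟨x.1.property, x.2.property⟩⟩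
  map_add' _ _ := rfl
  map_smul' _ _ := rfl
  left_inv _ := rfl
  right_inv _ := rfl

lemma finrank_ker_prodMap {k : Type} [Field k] {V1 V2 V3 V4 : Type*}
    [AddCommGroup V1] [AddCommGroup V2] [AddCommGroup V3] [AddCommGroup V4]
    [Module k V1] [Module k V2] [Module k V3] [Module k V4]
    [FiniteDimensional k V1] [FiniteDimensional k V3]
    (f : V1 →ₗ[k] V2) (g : V3 →ₗ[k] V4) :
    finrank k (ker (f.prodMap g)) = finrank k (ker f) + finrank k (ker g) := by
  rw [ker_prodMap, (prodSubEquiv (ker f) (ker g)).finrank_eq, Module.finrank_prod]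

lemma const_of_reachable {V : Type*} {G : SimpleGraph V} {g : V → ℤ}
    (h : ∀ a b, G.Adj a b → g a = g b) : ∀ {x y : V}, G.Reachable x y → g x = g y := by
  intro x y hr
  obtain ⟨w⟩ := hr
  induction w with
  | nil => rfl
  | cons ha _ ih => exact (h _ _ ha).trans ih

lemma ptle_le {P : Type} [PartialOrder P] {Te : Set (P × P)} (hTe : ∀ e ∈ Te, e.1 ⋖ e.2)
    {a b : P} (h : ptle Te a b) : a ≤ b := by
  induction h with
  | refl => exact le_refl _
  | tail _ hbc ih => exact ih.trans (hTe _ hbc).le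

lemma ptcov_mem {P : Type} [PartialOrder P] {Te : Set (P × P)} (hTe : ∀ e ∈ Te, e.1 ⋖ e.2)
    {x y : P} (h : ptcov Te x y) : (x, y) ∈ Te := by
  obtain ⟨⟨hxy, hnyx⟩, hmin⟩ := h
  rcases Relation.ReflTransGen.cases_head hxy with heq | ⟨w, hxw, hwy⟩
  · subst heq; exact absurd Relation.ReflTransGen.refl hnyx
  by_cases hw : w = y
  · exact hw ▸ hxw
  exact absurd
    ⟨hwy, fun hyw => hw (le_antisymm (ptle_le hTe hwy) (ptle_le hTe hyw))⟩
    (hmin w ⟨Relation.ReflTransGen.single hxw,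
      fun hwx => absurd (ptle_le hTe hwx) (hTe _ hxw).lt.not_ge⟩)

lemma ker_congr_src {k P : Type} [Field k] [PartialOrder P] (M : PModule k P) {a b c : P}
    (hab : a = b) (h : a ≤ c) (h' : b ≤ c) :
    finrank k (ker (M.map h)) = finrank k (ker (M.map h')) := by subst hab; rfl

lemma ker_congr_tgt {k P : Type} [Field k] [PartialOrder P] (M : PModule k P) {a b c : P}
    (hbc : b = c) (h : a ≤ b) (h' : a ≤ c) :
    finrank k (ker (M.map h)) = finrank k (ker (M.map h')) := by subst hbc; rfl


theorem statement16 (k : Type) [Field k] (P : Type) [Fintype P] [PartialOrder P]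
    -- `P` is line connected: the line digraph of `H_P` is connected as an undirected graph
    (hP : (SimpleGraph.fromRel (fun e f : Cov P => e.tgt = f.src)).Connected)
    (Te : Set (P × P))
    -- `T` is a spanning subgraph of the Hasse diagram `H_P` (on the full vertex set `P`) ...
    (hTe : ∀ e ∈ Te, e.1 ⋖ e.2)
    -- ... which is a tree ...
    (htree : (SimpleGraph.fromRel (fun a b : P => (a, b) ∈ Te)).IsTree)
    -- ... and is line connected
    (hlc : (SimpleGraph.fromRel (fun e f : ↥Te => (e : P × P).2 = (f : P × P).1)).Connected)
    (M N : PModule k P)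
    -- `[M] − [N]` has vanishing gradient on `T`:
    -- a natural isomorphism `φ*(M_T) ⊕ β*(N_T) ≅ φ*(N_T) ⊕ β*(M_T)`
    (hgrad : ∃ η : ∀ e : ↥Te,
        ((M.V (e : P × P).2 × N.V (e : P × P).1) ≃ₗ[k] (N.V (e : P × P).2 × M.V (e : P × P).1)),
      ∀ (e f : ↥Te), tline Te e f →
        ∀ (h0 : (e : P × P).1 ≤ (f : P × P).1) (h1 : (e : P × P).2 ≤ (f : P × P).2),
          (η f).toLinearMap.comp (LinearMap.prodMap (M.map h1) (N.map h0)) =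
            (LinearMap.prodMap (N.map h1) (M.map h0)).comp ((η e).toLinearMap)) :
    ∃ D : ℤ, ∀ x y : P, ptcov Te x y → ∀ h : x ≤ y,
      (Module.finrank k (LinearMap.ker (M.map h)) : ℤ)
        = (Module.finrank k (LinearMap.ker (N.map h)) : ℤ) + D ∧
      (Module.finrank k (M.V y ⧸ LinearMap.range (M.map h)) : ℤ)
        = (Module.finrank k (N.V y ⧸ LinearMap.range (N.map h)) : ℤ) + D := by
  classical
  obtain ⟨η, hη⟩ := hgrad
  have hne : Nonempty ↥Te := hlc.nonempty
  have le1 : ∀ e : ↥Te, (e : P × P).1 ≤ (e : P × P).2 := fun e => (hTe _ e.property).le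
  set s : ↥Te → ℤ := fun e =>
    (finrank k (ker (M.map (le1 e))) : ℤ) - finrank k (ker (N.map (le1 e))) with hs_def
  have step : ∀ e f : ↥Te, (e : P × P).2 = (f : P × P).1 → s e = s f := by
    intro e f hef
    have h0 : (e : P × P).1 ≤ (f : P × P).1 := hef ▸ le1 e
    have h1 : (e : P × P).2 ≤ (f : P × P).2 := by rw [hef]; exact le1 f
    have heq := hη e f (Relation.ReflTransGen.single hef) h0 h1
    have hk : finrank k (ker ((η f).toLinearMap.comp
          (LinearMap.prodMap (M.map h1) (N.map h0))))
        = finrank k (ker ((LinearMap.prodMap (N.map h1) (M.map h0)).comp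
          (η e).toLinearMap)) := by rw [heq]
    rw [LinearMap.ker_comp_of_ker_eq_bot _ (η f).ker] at hk
    rw [LinearMap.ker_comp, Submodule.comap_equiv_eq_map_symm,
      LinearEquiv.finrank_map_eq] at hk
    rw [finrank_ker_prodMap, finrank_ker_prodMap] at hk
    have c1 : finrank k (ker (M.map h1)) = finrank k (ker (M.map (le1 f))) :=
      ker_congr_src M hef h1 (le1 f)
    have c2 : finrank k (ker (N.map h1)) = finrank k (ker (N.map (le1 f))) :=
      ker_congr_src N hef h1 (le1 f)
    have c3 : finrank k (ker (M.map h0)) = finrank k (ker (M.map (le1 e))) :=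
      ker_congr_tgt M hef.symm h0 (le1 e)
    have c4 : finrank k (ker (N.map h0)) = finrank k (ker (N.map (le1 e))) :=
      ker_congr_tgt N hef.symm h0 (le1 e)
    simp only [hs_def]
    omega
  have hconst : ∀ e f : ↥Te, s e = s f := by
    intro e f
    refine const_of_reachable ?_ (hlc.preconnected e f)
    intro a b hab
    rw [SimpleGraph.fromRel_adj] at hab
    obtain ⟨-, h | h⟩ := hab
    · exact step a b h
    · exact (step b a h).symm
  obtain ⟨e0⟩ := hne
  refine ⟨s e0, ?_⟩
  intro x y hcov h
  have hmem : (x, y) ∈ Te := ptcov_mem hTe hcov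
  set e : ↥Te := ⟨(x, y), hmem⟩ with he_def
  have hs : s e0 = s e := hconst e0 e
  have hse : s e = (finrank k (ker (M.map h)) : ℤ) - finrank k (ker (N.map h)) := rfl
  have hdim : finrank k (M.V y) + finrank k (N.V x)
      = finrank k (N.V y) + finrank k (M.V x) := by
    have h2 := (η e).finrank_eq
    rwa [Module.finrank_prod, Module.finrank_prod] at h2
  have hM1 := LinearMap.finrank_range_add_finrank_ker (M.map h)
  have hM2 := Submodule.finrank_quotient_add_finrank (LinearMap.range (M.map h))
  have hN1 := LinearMap.finrank_range_add_finrank_ker (N.map h)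
  have hN2 := Submodule.finrank_quotient_add_finrank (LinearMap.range (N.map h))
  constructor <;> omega
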